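/- arXiv:1201.0574 — 3 statements merged into one kernel-verified Lean document; each statement's English description precedes it below -/
import Mathlib

section
/- If A is a complex Banach algebra and * and # are two involutions on A each making A (with its given norm) into a C*-algebra (i.e. ‖a*a‖ = ‖a‖² and ‖a#a‖ = ‖a‖² for all a), then a* = a# for all a ∈ A. -/
open Complex

/-- Key lemma: in a unital complex C*-algebra, an element `h` satisfying the norm
bound `‖h + i r 1‖² ≤ ‖h‖² + r²` for all real `r` is selfadjoint. -/
theorem bk_key {A : Type*} [CStarAlgebra A] [Nontrivial A] (h : A)
    (hb : ∀ r : ℝ, ‖h + (r : ℂ) • Complex.I • (1 : A)‖ ^ 2 ≤ ‖h‖ ^ 2 + r ^ 2) :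
    star h = h := by
  set q : A := (2⁻¹ : ℂ) • (Complex.I • (star h - h)) with hqdef
  have hq_sa : IsSelfAdjoint q := by
    rw [IsSelfAdjoint, hqdef]
    simp only [star_smul, star_sub, star_star, Complex.star_def, map_inv₀, map_ofNat, conj_I]
    module
  -- for each real r, q + r•1 is the imaginary part of h + i r 1
  have him : ∀ r : ℝ, q + (r : ℂ) • (1 : A) =
      (2⁻¹ : ℂ) • (Complex.I • (star (h + (r : ℂ) • Complex.I • (1 : A))
        - (h + (r : ℂ) • Complex.I • (1 : A)))) := by
    intro r
    simp only [star_add, star_smul, star_one, Complex.star_def, conj_ofReal, conj_I, hqdef]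
    match_scalars <;> (try (ring_nf; simp only [Complex.I_sq])) <;> ring
  have hnorm : ∀ r : ℝ, ‖q + (r : ℂ) • (1 : A)‖ ≤ ‖h + (r : ℂ) • Complex.I • (1 : A)‖ := by
    intro r
    rw [him r]
    set x := h + (r : ℂ) • Complex.I • (1 : A)
    calc ‖(2⁻¹ : ℂ) • (Complex.I • (star x - x))‖
        = 2⁻¹ * (1 * ‖star x - x‖) := by
          rw [norm_smul, norm_smul, Complex.norm_I]
          norm_num
      _ ≤ 2⁻¹ * (1 * (‖star x‖ + ‖x‖)) := by
          have := norm_sub_le (star x) x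
          nlinarith [norm_nonneg (star x - x)]
      _ = ‖x‖ := by rw [norm_star]; ring
  have hspec : ∀ z ∈ spectrum ℂ q, z = 0 := by
    intro z hz
    have hre : z = (z.re : ℂ) := hq_sa.mem_spectrum_eq_re hz
    have key : ∀ r : ℝ, (z.re + r) ^ 2 ≤ ‖h‖ ^ 2 + r ^ 2 := by
      intro r
      have h1 : ((z.re : ℂ) + (r : ℂ)) ∈ spectrum ℂ (algebraMap ℂ A (r : ℂ) + q) :=
        (spectrum.add_mem_add_iff).mpr (hre ▸ hz)
      have h1' : ((z.re : ℂ) + (r : ℂ)) ∈ spectrum ℂ (q + (r : ℂ) • (1 : A)) := by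
        rwa [Algebra.algebraMap_eq_smul_one, add_comm] at h1
      have h2 : ‖(z.re : ℂ) + (r : ℂ)‖ ≤ ‖q + (r : ℂ) • (1 : A)‖ :=
        spectrum.norm_le_norm_of_mem h1'
      have h3 : ‖(z.re : ℂ) + (r : ℂ)‖ = |z.re + r| := by
        rw [← Complex.ofReal_add, Complex.norm_real, Real.norm_eq_abs]
      have h4 := (h2.trans (hnorm r))
      have h5 := hb r
      have h6 : |z.re + r| ^ 2 = (z.re + r) ^ 2 := sq_abs _
      nlinarith [norm_nonneg (h + (r : ℂ) • Complex.I • (1 : A)), abs_nonneg (z.re + r)]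
    have hre0 : z.re = 0 := by
      by_contra hne
      have hk := key ((‖h‖ ^ 2 + 1) / (2 * z.re))
      have h2 : 2 * z.re * ((‖h‖ ^ 2 + 1) / (2 * z.re)) = ‖h‖ ^ 2 + 1 := by
        field_simp
      nlinarith [sq_nonneg z.re, sq_nonneg ((‖h‖ ^ 2 + 1) / (2 * z.re))]
    rw [hre, hre0, Complex.ofReal_zero]
  have hq0 : q = 0 := by
    have hr : spectralRadius ℂ q = 0 := by
      rw [spectralRadius]
      refine le_antisymm (iSup₂_le fun k hk => by simp [hspec k hk]) zero_le
    have := hq_sa.spectralRadius_eq_nnnorm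
    rw [hr] at this
    have : ‖q‖₊ = 0 := by exact_mod_cast this.symm
    simpa using this
  have : Complex.I • (star h - h) = 0 := by
    have := hq0
    rw [hqdef] at this
    rcases smul_eq_zero.mp this with h1 | h1
    · exact absurd h1 (by norm_num)
    · exact h1
  rcases smul_eq_zero.mp this with h1 | h1
  · exact absurd h1 Complex.I_ne_zero
  · exact sub_eq_zero.mp h1

/-- Uniqueness of involution in a C*-algebra (Bohnenblust–Karlin): if a complex
Banach algebra carries two involutions each satisfying the C*-identity for the
given norm, then the involutions coincide. -/
theorem stmt_0 {A : Type*} [NormedRing A] [NormedAlgebra ℂ A] [CompleteSpace A]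
    (s t : A → A)
    (hs_add : ∀ x y, s (x + y) = s x + s y)
    (hs_smul : ∀ (c : ℂ) (x : A), s (c • x) = (starRingEnd ℂ c) • s x)
    (hs_mul : ∀ x y, s (x * y) = s y * s x)
    (hs_inv : ∀ x, s (s x) = x)
    (hs_cstar : ∀ a, ‖s a * a‖ = ‖a‖ ^ 2)
    (ht_add : ∀ x y, t (x + y) = t x + t y)
    (ht_smul : ∀ (c : ℂ) (x : A), t (c • x) = (starRingEnd ℂ c) • t x)
    (ht_mul : ∀ x y, t (x * y) = t y * t x)
    (ht_inv : ∀ x, t (t x) = x)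
    (ht_cstar : ∀ a, ‖t a * a‖ = ‖a‖ ^ 2) :
    ∀ a, s a = t a := by
  intro a
  rcases subsingleton_or_nontrivial A with hss | hnt
  · exact Subsingleton.elim _ _
  -- s fixes 1
  have hs_one : s 1 = 1 := by
    have h1 : (1 : A) = s 1 * 1 := by
      conv_lhs => rw [← hs_inv 1, ← mul_one (s 1)]
      rw [hs_mul, hs_inv]
    rw [mul_one] at h1
    exact h1.symm
  have hs_sub : ∀ x y : A, s (x - y) = s x - s y := by
    intro x y
    have h2 := hs_add (x - y) y
    rw [sub_add_cancel] at h2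
    exact eq_sub_of_add_eq h2.symm
  -- install the C*-algebra structure coming from `t`
  letI SR : StarRing A :=
    { star := t, star_involutive := ht_inv, star_mul := ht_mul, star_add := ht_add }
  letI CR : CStarRing A :=
    ⟨fun x => by
      show ‖x‖ * ‖x‖ ≤ ‖t x * x‖
      rw [ht_cstar, sq]⟩
  letI SM : StarModule ℂ A :=
    ⟨fun c x => by
      show t (c • x) = star c • t x
      rw [ht_smul, starRingEnd_apply]⟩
  letI CSA : CStarAlgebra A :=
    { ‹NormedRing A›, SR, ‹CompleteSpace A›, CR, ‹NormedAlgebra ℂ A›, SM with }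
  have hnorm_one : ‖(1 : A)‖ = 1 := CStarRing.norm_one
  -- every s-selfadjoint element is t-selfadjoint
  have hsa : ∀ h : A, s h = h → t h = h := by
    intro h hsh
    refine bk_key h fun r => ?_
    set u : A := h + (r : ℂ) • Complex.I • (1 : A) with hudef
    have hsu : s u = h - (r : ℂ) • Complex.I • (1 : A) := by
      rw [hudef, hs_add, hsh, hs_smul, hs_smul, hs_one]
      simp only [Complex.conj_ofReal, Complex.conj_I]
      module
    have hmul : s u * u = h * h + ((r : ℝ) ^ 2 : ℂ) • (1 : A) := by
      rw [hsu, hudef]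
      simp only [sub_mul, mul_add, add_mul, smul_mul_assoc, mul_smul_comm, one_mul, mul_one,
        smul_smul]
      match_scalars <;> (try (ring_nf; simp only [Complex.I_sq])) <;> push_cast <;> ring
    have h1 : ‖u‖ ^ 2 = ‖s u * u‖ := (hs_cstar u).symm
    rw [h1, hmul]
    calc ‖h * h + ((r : ℝ) ^ 2 : ℂ) • (1 : A)‖
        ≤ ‖h * h‖ + ‖((r : ℝ) ^ 2 : ℂ) • (1 : A)‖ := norm_add_le _ _
      _ ≤ ‖h‖ * ‖h‖ + ‖(((r : ℝ) ^ 2 : ℂ))‖ * ‖(1 : A)‖ := by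
          gcongr
          · exact norm_mul_le _ _
          · rw [norm_smul]
      _ = ‖h‖ ^ 2 + r ^ 2 := by
          rw [hnorm_one, mul_one, norm_pow, Complex.norm_real, Real.norm_eq_abs, _root_.sq_abs]
          ring
  -- decompose a into s-selfadjoint parts
  set x : A := (2⁻¹ : ℂ) • (a + s a) with hxdef
  set y : A := (2⁻¹ : ℂ) • (Complex.I • (s a - a)) with hydef
  have hsx : s x = x := by
    rw [hxdef, hs_smul, hs_add, hs_inv]
    simp only [map_inv₀, map_ofNat]
    module
  have hsy : s y = y := by
    rw [hydef, hs_smul, hs_smul, hs_sub, hs_inv]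
    simp only [map_inv₀, map_ofNat, Complex.conj_I]
    module
  have hax : a = x + Complex.I • y := by
    rw [hxdef, hydef]
    match_scalars <;> (try (ring_nf; simp only [Complex.I_sq])) <;> ring
  have hsax : s a = x - Complex.I • y := by
    rw [hxdef, hydef]
    match_scalars <;> (try (ring_nf; simp only [Complex.I_sq])) <;> ring
  have htx := hsa x hsx
  have hty := hsa y hsy
  calc s a = x - Complex.I • y := hsax
    _ = t (x + Complex.I • y) := by
        rw [ht_add, htx, ht_smul, hty]
        simp only [Complex.conj_I]
        module
    _ = t a := by rw [← hax]
end

section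
/- Let {pα : α ∈ Λ} be a separating family of C*-seminorms on a *-algebra A (i.e. pα(a) = 0 for all α implies a = 0). Suppose * and # are two involutions on A such that every pα satisfies the C*-condition and *-invariance for both involutions, i.e. pα(a*a) = pα(a)² = pα(a#a) and pα(a*) = pα(a) = pα(a#) for all a and α. Then a* = a# for all a ∈ A. -/
open NormedSpace

section Helpers

variable {C : Type*} [NormedRing C] [NormedAlgebra ℂ C] [CompleteSpace C]

theorem uinv_antihom_one {C : Type*} [Ring C] (S : C → C)
    (hmul : ∀ x y, S (x * y) = S y * S x) (hinv : ∀ x, S (S x) = x) : S 1 = 1 := by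
  have h : S (S 1) = S (S 1) * S 1 := by simpa using hmul 1 (S 1)
  rw [hinv, one_mul] at h
  exact h.symm

theorem uinv_antihom_pow {C : Type*} [Ring C] (S : C → C)
    (hmul : ∀ x y, S (x * y) = S y * S x) (hone : S 1 = 1) (y : C) (n : ℕ) :
    S (y ^ n) = (S y) ^ n := by
  induction n with
  | zero => simpa using hone
  | succ n ih => rw [pow_succ, hmul, ih, pow_succ']

theorem uinv_conj_exp (S : C → C)
    (hadd : ∀ x y, S (x + y) = S x + S y)
    (hsmul : ∀ (c : ℂ) (x : C), S (c • x) = (starRingEnd ℂ c) • S x)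
    (hmul : ∀ x y, S (x * y) = S y * S x)
    (hone : S 1 = 1)
    (hcont : Continuous S) (x : C) :
    S (exp x) = exp (S x) := by
  have hsummable : Summable fun n : ℕ => ((Nat.factorial n : ℂ))⁻¹ • x ^ n := expSeries_summable' x
  have hS : HasSum (fun n : ℕ => S (((Nat.factorial n : ℂ))⁻¹ • x ^ n)) (S (exp x)) := by
    rw [exp_eq_tsum ℂ]
    simpa [Function.comp_def] using hsummable.hasSum.map (AddMonoidHom.mk' S hadd) hcont
  have heq : (fun n : ℕ => S (((Nat.factorial n : ℂ))⁻¹ • x ^ n)) = fun n : ℕ => ((Nat.factorial n : ℂ))⁻¹ • (S x) ^ n := by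
    funext n
    rw [hsmul, uinv_antihom_pow S hmul hone]
    congr 1
    simp
  rw [heq] at hS
  have h2 : exp (S x) = ∑' (n : ℕ), ((Nat.factorial n : ℂ))⁻¹ • (S x) ^ n := by
    rw [exp_eq_tsum ℂ]
  rw [h2]
  exact hS.tsum_eq.symm

end Helpers

open Filter Pointwise in
theorem uinv_key0 {C : Type*} [NormedRing C] [NormedAlgebra ℂ C] [CompleteSpace C] [NormOneClass C]
    (S T : C → C)
    (hS_add : ∀ x y, S (x + y) = S x + S y)
    (hS_smul : ∀ (c : ℂ) (x : C), S (c • x) = (starRingEnd ℂ c) • S x)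
    (hS_mul : ∀ x y, S (x * y) = S y * S x)
    (hS_inv : ∀ x, S (S x) = x)
    (hS_cont : Continuous S)
    (hT_add : ∀ x y, T (x + y) = T x + T y)
    (hT_smul : ∀ (c : ℂ) (x : C), T (c • x) = (starRingEnd ℂ c) • T x)
    (hT_mul : ∀ x y, T (x * y) = T y * T x)
    (hT_inv : ∀ x, T (T x) = x)
    (hT_cont : Continuous T)
    (hS_cstar : ∀ x, ‖S x * x‖ = ‖x‖ ^ 2)
    (hT_cstar : ∀ x, ‖T x * x‖ = ‖x‖ ^ 2) :
    ∀ x, S x = T x := by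
  have hS_one : S 1 = 1 := uinv_antihom_one S hS_mul hS_inv
  have hT_one : T 1 = 1 := uinv_antihom_one T hT_mul hT_inv
  have hS_exp : ∀ x, S (exp x) = exp (S x) :=
    uinv_conj_exp S hS_add hS_smul hS_mul hS_one hS_cont
  have hT_exp : ∀ x, T (exp x) = exp (T x) :=
    uinv_conj_exp T hT_add hT_smul hT_mul hT_one hT_cont
  have hRC : (exp : C → C) = exp := rfl
  have hS_real : ∀ (r : ℝ) (x : C), S (r • x) = r • S x := by
    intro r x
    rw [← algebraMap_smul ℂ r x, hS_smul, ← algebraMap_smul ℂ r (S x)]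
    congr 1
    simp [Complex.conj_ofReal]
  have hT_real : ∀ (r : ℝ) (x : C), T (r • x) = r • T x := by
    intro r x
    rw [← algebraMap_smul ℂ r x, hT_smul, ← algebraMap_smul ℂ r (T x)]
    congr 1
    simp [Complex.conj_ofReal]
  have hT_neg : ∀ x : C, T (-x) = - T x := by
    intro x; simpa using hT_smul (-1) x
  have hS_neg : ∀ x : C, S (-x) = - S x := by
    intro x; simpa using hS_smul (-1) x
  have hS_sub : ∀ x y : C, S (x - y) = S x - S y := by
    intro x y; rw [sub_eq_add_neg, hS_add, hS_neg, sub_eq_add_neg]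
  have main : ∀ h : C, S h = h → T h = h := by
    intro h hh
    set c : C := Complex.I • h with hcdef
    set b : C := -(Complex.I • T h) with hbdef
    have hTc : T c = b := by
      rw [hcdef, hT_smul, Complex.conj_I, neg_smul, ← hbdef]
    have hTb : T b = c := by
      rw [hbdef, hT_neg, hT_smul, Complex.conj_I, hT_inv, neg_smul, neg_neg, ← hcdef]
    have hSc : S c = -c := by
      rw [hcdef, hS_smul, hh, Complex.conj_I, neg_smul]
    set m : C := c + b with hmdef
    have hTm : T m = m := by
      rw [hmdef, hT_add, hTc, hTb, add_comm]
    -- S-unitarity of exp (r • c) gives norm one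
    have hu_norm : ∀ r : ℝ, ‖exp (r • c)‖ = 1 := by
      intro r
      have hSu : S (exp (r • c)) = exp (-(r • c)) := by
        rw [hS_exp, hS_real, hSc, smul_neg]
      have hunit : S (exp (r • c)) * exp (r • c) = 1 := by
        letI : NormedAlgebra ℚ C := .restrictScalars ℚ ℂ C
        rw [hSu, ← exp_add_of_commute ((Commute.refl (r • c)).neg_left), neg_add_cancel,
          NormedSpace.exp_zero]
      have h2 := hS_cstar (exp (r • c))
      rw [hunit, norm_one] at h2
      have h3 : (‖exp (r • c)‖ - 1) * (‖exp (r • c)‖ + 1) = 0 := by linear_combination -h2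
      rcases mul_eq_zero.mp h3 with h4 | h4
      · linarith
      · linarith [norm_nonneg (exp (r • c))]
    have hTu : ∀ r : ℝ, T (exp (r • c)) = exp (r • b) := by
      intro r; rw [hT_exp, hT_real, hTc]
    have hw_norm : ∀ r : ℝ, ‖exp (r • b) * exp (r • c)‖ = 1 := by
      intro r
      have h2 := hT_cstar (exp (r • c))
      rw [hTu r, hu_norm r] at h2
      rw [h2]; norm_num
    have hderiv : HasDerivAt (fun r : ℝ => exp (r • b) * exp (r • c)) m 0 := by
      have h1 : HasDerivAt (fun r : ℝ => exp (r • b)) b 0 := by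
        simpa [hRC, zero_smul, NormedSpace.exp_zero] using
          hasDerivAt_exp_smul_const (𝕂 := ℝ) b (0 : ℝ)
      have h2c : HasDerivAt (fun r : ℝ => exp (r • c)) c 0 := by
        simpa [hRC, zero_smul, NormedSpace.exp_zero] using
          hasDerivAt_exp_smul_const (𝕂 := ℝ) c (0 : ℝ)
      have h3 := h1.mul h2c
      simp only [zero_smul, NormedSpace.exp_zero, one_mul, mul_one] at h3
      rw [hmdef, add_comm]
      exact h3
    have smul_mem : ∀ z : ℂ, z ≠ 0 → ∀ l : ℂ, l ∈ spectrum ℂ m → z * l ∈ spectrum ℂ (z • m) := by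
      intro z hz l hl
      have h := (spectrum.smul_mem_smul_iff (a := m) (s := l) (r := Units.mk0 z hz)).mpr hl
      simpa [Units.smul_def] using h
    have him : ∀ l ∈ spectrum ℂ m, l.im = 0 := by
      intro l hl
      have gen : ∀ z : ℂ, z ≠ 0 → starRingEnd ℂ z = -z → (z * l).re ≤ 0 := by
        intro z hz hcz
        have hTv : T (exp (z • m)) = exp (-(z • m)) := by
          rw [hT_exp]
          congr 1
          rw [hT_smul, hTm, hcz, neg_smul]
        have hunit : T (exp (z • m)) * exp (z • m) = 1 := by
          letI : NormedAlgebra ℚ C := .restrictScalars ℚ ℂ C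
          rw [hTv, ← exp_add_of_commute ((Commute.refl (z • m)).neg_left), neg_add_cancel,
            NormedSpace.exp_zero]
        have h2 := hT_cstar (exp (z • m))
        rw [hunit, norm_one] at h2
        have h3 : (‖exp (z • m)‖ - 1) * (‖exp (z • m)‖ + 1) = 0 := by linear_combination -h2
        have hn : ‖exp (z • m)‖ = 1 := by
          rcases mul_eq_zero.mp h3 with h4 | h4
          · linarith
          · linarith [norm_nonneg (exp (z • m))]
        have hmem := spectrum.exp_mem_exp (𝕜 := ℂ) (z • m) (smul_mem z hz l hl)
        have hle := spectrum.norm_le_norm_of_mem hmem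
        rw [hn, ← Complex.exp_eq_exp_ℂ, Complex.norm_exp] at hle
        exact Real.exp_le_one_iff.mp hle
      have h1 := gen Complex.I Complex.I_ne_zero (by simp)
      have h2 := gen (-Complex.I) (by simp [Complex.I_ne_zero]) (by simp)
      simp [Complex.mul_re] at h1 h2
      linarith
    have hre : ∀ l ∈ spectrum ℂ m, l.re = 0 := by
      intro l hl
      have hlo := hasDerivAt_iff_isLittleO.mp hderiv
      have hbound : ∀ ε : ℝ, 0 < ε → |l.re| ≤ ε := by
        intro ε hε
        have hev := hlo.bound hε
        rw [Metric.eventually_nhds_iff] at hev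
        obtain ⟨δ, hδpos, hδ⟩ := hev
        have core : ∀ r : ℝ, r ≠ 0 → |r| < δ → r * l.re ≤ ε * |r| := by
          intro r hr hrδ
          have h1 := hδ (y := r) (by simpa [Real.dist_eq] using hrδ)
          simp only [sub_zero, zero_smul, NormedSpace.exp_zero, one_mul] at h1
          have hmem : (1 : ℂ) + (r : ℂ) * l ∈ spectrum ℂ ((1 : C) + r • m) := by
            have hm1 := smul_mem (r : ℂ) (by exact_mod_cast hr) l hl
            have hset := spectrum.singleton_add_eq ((r : ℂ) • m) (1 : ℂ)
            have hin : (1 : ℂ) + (r : ℂ) * l ∈ ({(1 : ℂ)} + spectrum ℂ ((r : ℂ) • m)) :=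
              Set.add_mem_add (Set.mem_singleton _) hm1
            rw [hset] at hin
            simpa [algebraMap_smul] using hin
          have h2 := spectrum.norm_le_norm_of_mem hmem
          have h4 : (1 : ℝ) + r * l.re ≤ ‖(1 : ℂ) + (r : ℂ) * l‖ := by
            have h5 := Complex.re_le_norm (1 + (r : ℂ) * l)
            simpa [Complex.add_re, Complex.one_re, Complex.mul_re, Complex.ofReal_re,
              Complex.ofReal_im] using h5
          have h6 : ‖(1 : C) + r • m‖ ≤ 1 + ε * |r| := by
            have h7 : ‖(1 : C) + r • m‖ - ‖exp (r • b) * exp (r • c)‖ ≤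
                ‖(1 : C) + r • m - exp (r • b) * exp (r • c)‖ := norm_sub_norm_le _ _
            have h8 : (1 : C) + r • m - exp (r • b) * exp (r • c) =
                -(exp (r • b) * exp (r • c) - 1 - r • m) := by abel
            rw [h8, norm_neg, hw_norm r] at h7
            have h9 : ‖exp (r • b) * exp (r • c) - 1 - r • m‖ ≤ ε * |r| := by
              simpa [Real.norm_eq_abs] using h1
            linarith
          have := h2.trans h6
          linarith
        have e1 : |δ / 2| = δ / 2 := abs_of_pos (by positivity)
        have e2 : |(-(δ / 2))| = δ / 2 := by rw [abs_neg, e1]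
        have c1 := core (δ / 2) (by positivity) (by rw [e1]; linarith)
        have c2 := core (-(δ / 2)) (neg_ne_zero.mpr (by positivity)) (by rw [e2]; linarith)
        rw [e1] at c1
        rw [e2] at c2
        rw [abs_le]
        constructor <;> nlinarith
      by_contra hne
      have habs : 0 < |l.re| := abs_pos.mpr hne
      have := hbound (|l.re| / 2) (by positivity)
      linarith
    have hzero : ∀ l ∈ spectrum ℂ m, l = (0 : ℂ) := fun l hl =>
      Complex.ext (hre l hl) (him l hl)
    have hrad : spectralRadius ℂ m = 0 := by
      refine le_antisymm ?_ (zero_le)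
      refine iSup₂_le fun l hl => ?_
      simp [hzero l hl]
    have hTpow : ∀ n : ℕ, T (m ^ n) = m ^ n := by
      intro n; rw [uinv_antihom_pow T hT_mul hT_one, hTm]
    have hpow : ∀ k : ℕ, ‖m ^ 2 ^ k‖ = ‖m‖ ^ 2 ^ k := by
      intro k
      induction k with
      | zero => simp
      | succ k ih =>
        have hsq := hT_cstar (m ^ 2 ^ k)
        rw [hTpow] at hsq
        calc ‖m ^ 2 ^ (k + 1)‖ = ‖m ^ 2 ^ k * m ^ 2 ^ k‖ := by
              rw [← sq, ← pow_mul, ← pow_succ]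
          _ = ‖m ^ 2 ^ k‖ ^ 2 := hsq
          _ = (‖m‖ ^ 2 ^ k) ^ 2 := by rw [ih]
          _ = ‖m‖ ^ 2 ^ (k + 1) := by rw [← pow_mul, ← pow_succ]
    have hg := spectrum.pow_norm_pow_one_div_tendsto_nhds_spectralRadius m
    rw [hrad] at hg
    have h2pow : Tendsto (fun k : ℕ => 2 ^ k) atTop atTop :=
      tendsto_pow_atTop_atTop_of_one_lt (by norm_num)
    have hsub := hg.comp h2pow
    have hconstval : ∀ k : ℕ, ‖m ^ 2 ^ k‖ ^ ((1 : ℝ) / ((2 : ℕ) ^ k : ℕ)) = ‖m‖ := by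
      intro k
      rw [hpow k, ← Real.rpow_natCast ‖m‖ (2 ^ k), ← Real.rpow_mul (norm_nonneg m)]
      rw [mul_one_div, div_self (Nat.cast_ne_zero.mpr (by positivity)), Real.rpow_one]
    have hconst : Tendsto (fun _ : ℕ => ENNReal.ofReal ‖m‖) atTop (nhds 0) := by
      refine hsub.congr fun k => ?_
      exact congrArg ENNReal.ofReal (hconstval k)
    have hm0 : (0 : ENNReal) = ENNReal.ofReal ‖m‖ :=
      tendsto_nhds_unique hconst tendsto_const_nhds
    have hmnorm : ‖m‖ ≤ 0 := ENNReal.ofReal_eq_zero.mp hm0.symm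
    have hmz : m = 0 := norm_eq_zero.mp (le_antisymm hmnorm (norm_nonneg m))
    have hIh : Complex.I • h = Complex.I • T h := by
      have hcb : c + b = 0 := by rw [← hmdef]; exact hmz
      rw [hcdef, hbdef] at hcb
      exact sub_eq_zero.mp (by rwa [sub_eq_add_neg])
    have := congrArg (fun z => (Complex.I)⁻¹ • z) hIh
    simpa [smul_smul, inv_mul_cancel₀ Complex.I_ne_zero] using this.symm
  intro x
  have hsc : Complex.I * -(2⁻¹ * Complex.I) = (2⁻¹ : ℂ) := by
    rw [mul_neg, mul_left_comm, Complex.I_mul_I]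
    ring
  have hconj2 : (starRingEnd ℂ) 2 = 2 := by
    rw [show (2 : ℂ) = ((2 : ℝ) : ℂ) by norm_num, Complex.conj_ofReal]
  set k1 : C := (2⁻¹ : ℂ) • (x + S x) with hk1
  set k2 : C := (-(2⁻¹ * Complex.I)) • (x - S x) with hk2
  have hSk1 : S k1 = k1 := by
    rw [hk1, hS_smul, hS_add, hS_inv]
    have : (starRingEnd ℂ) (2⁻¹ : ℂ) = (2⁻¹ : ℂ) := by rw [map_inv₀, hconj2]
    rw [this, add_comm]
  have hck2 : (starRingEnd ℂ) (-(2⁻¹ * Complex.I)) = 2⁻¹ * Complex.I := by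
    rw [map_neg, map_mul, map_inv₀, hconj2, Complex.conj_I]
    ring
  have hSk2 : S k2 = k2 := by
    rw [hk2, hS_smul, hS_sub, hS_inv, hck2]
    rw [neg_smul, ← smul_neg, neg_sub]
  have e1 : x = k1 + Complex.I • k2 := by
    rw [hk1, hk2, smul_smul, hsc]
    module
  have e2 : S x = k1 - Complex.I • k2 := by
    rw [hk1, hk2, smul_smul, hsc]
    module
  have t1 := main k1 hSk1
  have t2 := main k2 hSk2
  have hTx : T x = k1 - Complex.I • k2 := by
    conv_lhs => rw [e1]
    rw [hT_add, t1, hT_smul, Complex.conj_I, neg_smul, t2, ← sub_eq_add_neg]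
  rw [e2, hTx]


open UniformSpace in

theorem uinv_key1 {B : Type*} [SeminormedRing B] [NormedAlgebra ℂ B]
    (hone : ‖(1 : B)‖ = 1)
    (s t : B → B)
    (hs_add : ∀ x y, s (x + y) = s x + s y)
    (hs_smul : ∀ (c : ℂ) (x : B), s (c • x) = (starRingEnd ℂ c) • s x)
    (hs_mul : ∀ x y, s (x * y) = s y * s x)
    (hs_inv : ∀ x, s (s x) = x)
    (ht_add : ∀ x y, t (x + y) = t x + t y)
    (ht_smul : ∀ (c : ℂ) (x : B), t (c • x) = (starRingEnd ℂ c) • t x)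
    (ht_mul : ∀ x y, t (x * y) = t y * t x)
    (ht_inv : ∀ x, t (t x) = x)
    (hs_cstar : ∀ x, ‖s x * x‖ = ‖x‖ ^ 2)
    (ht_cstar : ∀ x, ‖t x * x‖ = ‖x‖ ^ 2)
    (hs_norm : ∀ x, ‖s x‖ = ‖x‖)
    (ht_norm : ∀ x, ‖t x‖ = ‖x‖) :
    ∀ x : B, ‖s x - t x‖ = 0 := by
  have huc : ∀ f : B → B, (∀ x y, f (x + y) = f x + f y) →
      (∀ (c : ℂ) (x : B), f (c • x) = (starRingEnd ℂ c) • f x) →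
      (∀ x, ‖f x‖ = ‖x‖) → UniformContinuous f := by
    intro f hadd hsmul hnorm
    have hneg : ∀ x, f (-x) = -f x := fun x => by simpa using hsmul (-1) x
    have hsub : ∀ x y, f (x - y) = f x - f y := fun x y => by
      rw [sub_eq_add_neg, hadd, hneg, sub_eq_add_neg]
    have : LipschitzWith 1 f := LipschitzWith.of_dist_le_mul fun x y => by
      rw [dist_eq_norm, dist_eq_norm, ← hsub, hnorm]
      simp
    exact this.uniformContinuous
  have hs_uc := huc s hs_add hs_smul hs_norm
  have ht_uc := huc t ht_add ht_smul ht_norm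
  letI : NormedAlgebra ℂ (Completion B) :=
    { (inferInstance : Algebra ℂ (Completion B)) with
      norm_smul_le := fun c x => _root_.norm_smul_le c x }
  haveI : NormOneClass (Completion B) :=
    ⟨by rw [← Completion.coe_one, Completion.norm_coe, hone]⟩
  set S : Completion B → Completion B := Completion.map s with hSdef
  set T : Completion B → Completion B := Completion.map t with hTdef
  have hS_coe : ∀ x : B, S ↑x = ↑(s x) := fun x => Completion.map_coe hs_uc x
  have hT_coe : ∀ x : B, T ↑x = ↑(t x) := fun x => Completion.map_coe ht_uc x
  have hS_cont : Continuous S := Completion.continuous_map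
  have hT_cont : Continuous T := Completion.continuous_map
  -- transfer properties to the completion
  have ext1 : ∀ (f : B → B) (F : Completion B → Completion B), Continuous F →
      (∀ x : B, F ↑x = ↑(f x)) →
      (∀ x y, f (x + y) = f x + f y) → ∀ x y, F (x + y) = F x + F y := by
    intro f F hF hFc hadd x y
    refine Completion.induction_on₂ x y ?_ fun a b => ?_
    · exact isClosed_eq (hF.comp continuous_add)
        ((hF.comp continuous_fst).add (hF.comp continuous_snd))
    · rw [← Completion.coe_add, hFc, hFc, hFc, hadd, Completion.coe_add]
  have hS_add' := ext1 s S hS_cont hS_coe hs_add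
  have hT_add' := ext1 t T hT_cont hT_coe ht_add
  have ext2 : ∀ (f : B → B) (F : Completion B → Completion B), Continuous F →
      (∀ x : B, F ↑x = ↑(f x)) →
      (∀ (c : ℂ) (x : B), f (c • x) = (starRingEnd ℂ c) • f x) →
      ∀ (c : ℂ) (x : Completion B), F (c • x) = (starRingEnd ℂ c) • F x := by
    intro f F hF hFc hsm c x
    refine Completion.induction_on x ?_ fun a => ?_
    · exact isClosed_eq (hF.comp (continuous_const_smul c))
        ((continuous_const_smul _).comp hF)
    · rw [← Completion.coe_smul, hFc, hsm, Completion.coe_smul, hFc]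
  have hS_smul' := ext2 s S hS_cont hS_coe hs_smul
  have hT_smul' := ext2 t T hT_cont hT_coe ht_smul
  have ext3 : ∀ (f : B → B) (F : Completion B → Completion B), Continuous F →
      (∀ x : B, F ↑x = ↑(f x)) →
      (∀ x y, f (x * y) = f y * f x) → ∀ x y, F (x * y) = F y * F x := by
    intro f F hF hFc hm x y
    refine Completion.induction_on₂ x y ?_ fun a b => ?_
    · exact isClosed_eq (hF.comp continuous_mul)
        ((hF.comp continuous_snd).mul (hF.comp continuous_fst))
    · rw [← Completion.coe_mul, hFc, hFc, hFc, hm, Completion.coe_mul]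
  have hS_mul' := ext3 s S hS_cont hS_coe hs_mul
  have hT_mul' := ext3 t T hT_cont hT_coe ht_mul
  have ext4 : ∀ (f : B → B) (F : Completion B → Completion B), Continuous F →
      (∀ x : B, F ↑x = ↑(f x)) →
      (∀ x, f (f x) = x) → ∀ x, F (F x) = x := by
    intro f F hF hFc hi x
    refine Completion.induction_on x ?_ fun a => ?_
    · exact isClosed_eq (hF.comp hF) continuous_id
    · rw [hFc, hFc, hi]
  have hS_inv' := ext4 s S hS_cont hS_coe hs_inv
  have hT_inv' := ext4 t T hT_cont hT_coe ht_inv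
  have ext5 : ∀ (f : B → B) (F : Completion B → Completion B), Continuous F →
      (∀ x : B, F ↑x = ↑(f x)) →
      (∀ x, ‖f x * x‖ = ‖x‖ ^ 2) → ∀ x : Completion B, ‖F x * x‖ = ‖x‖ ^ 2 := by
    intro f F hF hFc hcs x
    refine Completion.induction_on x ?_ fun a => ?_
    · exact isClosed_eq ((hF.mul continuous_id).norm) (continuous_norm.pow 2)
    · rw [hFc, ← Completion.coe_mul, Completion.norm_coe, Completion.norm_coe, hcs]
  have hS_cstar' := ext5 s S hS_cont hS_coe hs_cstar
  have hT_cstar' := ext5 t T hT_cont hT_coe ht_cstar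
  have hkey := uinv_key0 S T hS_add' hS_smul' hS_mul' hS_inv' hS_cont
    hT_add' hT_smul' hT_mul' hT_inv' hT_cont hS_cstar' hT_cstar'
  intro x
  have h1 : ((s x : B) : Completion B) = ((t x : B) : Completion B) := by
    rw [← hS_coe, ← hT_coe, hkey]
  have h2 : ‖((s x - t x : B) : Completion B)‖ = 0 := by
    rw [Completion.coe_sub, h1, sub_self, norm_zero]
  rwa [Completion.norm_coe] at h2


/-- Main theorem: uniqueness of involution in locally C*-algebras. If a complex
algebra carries a separating family of seminorms which are C*-seminorms (with
*-invariance) for each of two involutions, then the two involutions coincide. -/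
theorem stmt_5 {A ι : Type*} [Ring A] [Algebra ℂ A]
    (p : ι → Seminorm ℂ A)
    (hsep : ∀ a : A, (∀ i, p i a = 0) → a = 0)
    (hmul : ∀ i, ∀ a b : A, p i (a * b) ≤ p i a * p i b)
    (s t : A → A)
    (hs_add : ∀ x y, s (x + y) = s x + s y)
    (hs_smul : ∀ (c : ℂ) (x : A), s (c • x) = (starRingEnd ℂ c) • s x)
    (hs_mul : ∀ x y, s (x * y) = s y * s x)
    (hs_inv : ∀ x, s (s x) = x)
    (ht_add : ∀ x y, t (x + y) = t x + t y)
    (ht_smul : ∀ (c : ℂ) (x : A), t (c • x) = (starRingEnd ℂ c) • t x)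
    (ht_mul : ∀ x y, t (x * y) = t y * t x)
    (ht_inv : ∀ x, t (t x) = x)
    (hs_cstar : ∀ i, ∀ a : A, p i (s a * a) = p i a ^ 2)
    (ht_cstar : ∀ i, ∀ a : A, p i (t a * a) = p i a ^ 2)
    (hs_star : ∀ i, ∀ a : A, p i (s a) = p i a)
    (ht_star : ∀ i, ∀ a : A, p i (t a) = p i a) :
    ∀ a : A, s a = t a := by
  intro a
  have hs_one : s 1 = 1 := uinv_antihom_one s hs_mul hs_inv
  have key : ∀ i, p i (s a - t a) = 0 := by
    intro i
    by_cases h1 : p i 1 = 0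
    · have h2 : p i (s a - t a) ≤ p i (s a - t a) * p i 1 := by
        simpa using hmul i (s a - t a) 1
      rw [h1, mul_zero] at h2
      exact le_antisymm h2 (apply_nonneg _ _)
    · have hone : p i 1 = 1 := by
        have h2 := hs_cstar i 1
        rw [hs_one, one_mul] at h2
        have h3 : p i 1 * (p i 1 - 1) = 0 := by linear_combination -h2
        rcases mul_eq_zero.mp h3 with h4 | h4
        · exact absurd h4 h1
        · linarith
      letI sg : SeminormedAddCommGroup A :=
        AddGroupSeminorm.toSeminormedAddCommGroup (p i).toAddGroupSeminorm
      letI sr : SeminormedRing A := { sg, ‹Ring A› with norm_mul_le := hmul i }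
      letI na : NormedAlgebra ℂ A := { ‹Algebra ℂ A› with
        norm_smul_le := fun c x => le_of_eq (map_smul_eq_mul (p i) c x) }
      exact uinv_key1 hone s t hs_add hs_smul hs_mul hs_inv ht_add ht_smul ht_mul ht_inv
        (hs_cstar i) (ht_cstar i) (hs_star i) (ht_star i) a
  exact sub_eq_zero.mp (hsep _ key)
end

section
/- Let A be a C*-algebra and let # be another involution on A satisfying the C*-identity ‖a#a‖ = ‖a‖² for the given norm. Then the identity map (A, *) → (A, #) is a *-isomorphism; in particular every element that is hermitian for * is hermitian for #. -/
open NormedSpace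

theorem bk_unitary_of_contraction {A : Type*} [CStarAlgebra A] {u v : A}
    (huv : u * v = 1) (hvu : v * u = 1) (hu : ‖u‖ ≤ 1) (hv : ‖v‖ ≤ 1) :
    star u = v := by
  nontriviality A
  have hb : IsSelfAdjoint (star u * u) := IsSelfAdjoint.star_mul_self u
  set b := star u * u with hb_def
  have hbc : b * (v * star v) = 1 := by
    calc b * (v * star v) = star u * ((u * v) * star v) := by
          rw [hb_def, mul_assoc, ← mul_assoc u v]
    _ = star u * star v := by rw [huv, one_mul]
    _ = star (v * u) := by rw [star_mul]
    _ = 1 := by rw [hvu, star_one]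
  have hcb : (v * star v) * b = 1 := by
    calc (v * star v) * b = v * (star (u * v)) * u := by
          rw [star_mul, hb_def]; noncomm_ring
    _ = 1 := by rw [huv, star_one, mul_one, hvu]
  set U : Aˣ := ⟨b, v * star v, hbc, hcb⟩ with hU
  have hspec : spectrum ℂ b ⊆ {1} := by
    intro z hz
    have hz_re : z = z.re := hb.mem_spectrum_eq_re hz
    have hz_ne : z ≠ 0 := by
      rintro rfl
      exact spectrum.zero_notMem ℂ U.isUnit hz
    have hnb : ‖b‖ ≤ 1 := le_trans (norm_mul_le _ _)
      (by rw [norm_star]; exact mul_le_one₀ hu (norm_nonneg _) hu)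
    have h1 : ‖z‖ ≤ 1 := le_trans (spectrum.norm_le_norm_of_mem hz) hnb
    have hinv : (↑(Units.mk0 z hz_ne)⁻¹ : ℂ) ∈ spectrum ℂ ((↑U⁻¹ : A)) :=
      spectrum.inv_mem_iff.mp (by simpa using hz)
    have hnc : ‖(v * star v : A)‖ ≤ 1 := le_trans (norm_mul_le _ _)
      (by rw [norm_star]; exact mul_le_one₀ hv (norm_nonneg _) hv)
    have h2 : ‖z‖⁻¹ ≤ 1 := by
      have := spectrum.norm_le_norm_of_mem hinv
      simpa using le_trans this hnc
    have hzpos : 0 < ‖z‖ := norm_pos_iff.mpr hz_ne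
    have hz1 : ‖z‖ = 1 := le_antisymm h1 ((inv_le_one₀ hzpos).mp h2)
    have hre_nonneg : 0 ≤ z.re := by
      have : (z.re : ℝ) ∈ spectrum ℝ b := by
        rw [← spectrum.algebraMap_mem_iff ℂ]
        simpa [Complex.coe_algebraMap] using hz_re ▸ hz
      exact spectrum_star_mul_self_nonneg z.re this
    have hre1 : z.re = 1 := by
      have habs : |z.re| = 1 := by rw [hz_re] at hz1; simpa using hz1
      rwa [abs_of_nonneg hre_nonneg] at habs
    rw [Set.mem_singleton_iff, hz_re, hre1, Complex.ofReal_one]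
  -- conclude b = 1
  have h1sa : IsSelfAdjoint (1 : A) := by rw [IsSelfAdjoint]; exact star_one A
  have hd : IsSelfAdjoint (b - 1) := hb.sub h1sa
  have hdspec : spectrum ℂ (b - 1) ⊆ {0} := by
    intro w hw
    rw [spectrum.mem_iff] at hw
    have key : algebraMap ℂ A (w + 1) - b = algebraMap ℂ A w - (b - 1) := by
      rw [map_add, map_one]; abel
    have hw1 : w + 1 ∈ spectrum ℂ b := spectrum.mem_iff.mpr (key ▸ hw)
    have := hspec hw1
    simp only [Set.mem_singleton_iff] at this ⊢
    linear_combination this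
  have hrad : spectralRadius ℂ (b - 1) = 0 := by
    rw [spectralRadius]
    refine le_antisymm ?_ (zero_le)
    refine iSup₂_le fun z hz => ?_
    have := hdspec hz
    simp_all
  have hnn : ‖b - 1‖₊ = 0 := by
    have := hd.spectralRadius_eq_nnnorm
    rw [hrad] at this
    exact_mod_cast this.symm
  have hb1 : b = 1 := by
    rw [← sub_eq_zero]
    exact_mod_cast nnnorm_eq_zero.mp hnn
  calc star u = star u * (u * v) := by rw [huv, mul_one]
  _ = b * v := by rw [hb_def]; noncomm_ring
  _ = v := by rw [hb1, one_mul]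

/-- A type synonym used to carry the second involution as a `StarRing` structure. -/
def BKWrap (A : Type*) : Type _ := A

/-- The identity map into the type synonym `BKWrap A`. -/
def BKWrap.mk {A : Type*} (a : A) : BKWrap A := a

theorem bk_selfadjoint {A : Type*} [NormedRing A] [StarRing A] [CStarRing A]
    [CompleteSpace A] [NormedAlgebra ℂ A] [StarModule ℂ A] [Nontrivial A]
    (f : A → A)
    (hf_add : ∀ x y, f (x + y) = f x + f y)
    (hf_smul : ∀ (c : ℂ) (x : A), f (c • x) = (starRingEnd ℂ c) • f x)
    (hf_mul : ∀ x y, f (x * y) = f y * f x)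
    (hf_inv : ∀ x, f (f x) = x)
    (hf_cstar : ∀ a, ‖f a * a‖ = ‖a‖ ^ 2)
    (a : A) (ha : star a = a) : f a = a := by
  letI : NormedRing (BKWrap A) := ‹NormedRing A›
  letI : StarRing (BKWrap A) :=
    { star := f
      star_involutive := hf_inv
      star_mul := hf_mul
      star_add := hf_add }
  letI : CStarRing (BKWrap A) := ⟨by
    intro x
    have h : ‖f (id x : A) * (id x : A)‖ = ‖(id x : A)‖ * ‖(id x : A)‖ := by
      have := hf_cstar (id x); rwa [sq] at this
    exact h.ge⟩
  letI : NormedAlgebra ℂ (BKWrap A) := ‹NormedAlgebra ℂ A›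
  letI : CompleteSpace (BKWrap A) := ‹CompleteSpace A›
  letI : StarModule ℂ (BKWrap A) := ⟨by
    intro c x
    have := hf_smul c x
    rwa [starRingEnd_apply] at this⟩
  letI : CStarAlgebra (BKWrap A) := CStarAlgebra.mk
  letI : Nontrivial (BKWrap A) := ‹Nontrivial A›
  let +nondep : NormedAlgebra ℚ A := .restrictScalars ℚ ℂ A
  set x : A := Complex.I • a with hx
  set y : A := Complex.I • f a with hy
  have hstar_x : star x = -x := by
    rw [hx, star_smul, Complex.star_def, Complex.conj_I, ha, neg_smul]
  have hcomm : ∀ s t : ℝ, exp (s • x) * exp (t • x) = exp ((s + t) • x) :=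
    fun s t => by
      rw [← exp_add_of_commute (((Commute.refl x).smul_left s).smul_right t), ← add_smul]
  have hinv : ∀ t : ℝ, exp (t • x) * exp ((-t) • x) = 1 := fun t => by
    rw [hcomm, add_neg_cancel, zero_smul, exp_zero]
  have hinv' : ∀ t : ℝ, exp ((-t) • x) * exp (t • x) = 1 := fun t => by
    rw [hcomm, neg_add_cancel, zero_smul, exp_zero]
  have hstar_exp : ∀ t : ℝ, star (exp (t • x)) = exp ((-t) • x) := fun t => by
    rw [star_exp, star_smul, star_trivial, hstar_x, smul_neg, ← neg_smul]
  have hnorm : ∀ t : ℝ, ‖exp (t • x)‖ = 1 := fun t => by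
    have h2 : ‖exp (t • x)‖ * ‖exp (t • x)‖ = 1 := by
      rw [← CStarRing.norm_star_mul_self, hstar_exp, hinv', CStarRing.norm_one]
    nlinarith [norm_nonneg (exp (t • x))]
  have hkey : ∀ t : ℝ, f (exp (t • x)) = exp ((-t) • x) := fun t => by
    have h := bk_unitary_of_contraction (A := BKWrap A)
      (u := exp (BKWrap.mk (t • x))) (v := exp (BKWrap.mk ((-t) • x)))
      (by exact hinv t) (by exact hinv' t)
      (by exact le_of_eq (hnorm t)) (by exact le_of_eq (hnorm (-t)))
    exact h
  have hreal_smul : ∀ (t : ℝ) (w : A), (t : ℂ) • w = t • w := fun t w => by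
    rw [← smul_one_smul ℂ t w, Complex.real_smul, mul_one]
  have hfx : f x = -y := by
    rw [hx, hy, hf_smul, starRingEnd_apply, Complex.star_def, Complex.conj_I, neg_smul]
  have hftx : ∀ t : ℝ, f (t • x) = (-t) • y := fun t => by
    rw [← hreal_smul t x, hf_smul, starRingEnd_apply, Complex.star_def, Complex.conj_ofReal,
      hreal_smul t (f x), hfx, smul_neg, ← neg_smul]
  have hfexp : ∀ t : ℝ, f (exp (t • x)) = exp ((-t) • y) := fun t => by
    have h1 : star (exp (BKWrap.mk (t • x))) = exp (star (BKWrap.mk (t • x))) :=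
      star_exp _
    have h2 : f (exp (t • x)) = exp (f (t • x)) := h1
    rw [h2, hftx]
  have hsx : ∀ s : ℝ, exp (s • y) = exp (s • x) := fun s => by
    have h1 := (hfexp (-s)).symm.trans (hkey (-s))
    rwa [neg_neg] at h1
  have hd1 : HasDerivAt (fun s : ℝ => exp (s • x)) x 0 := by
    simpa using hasDerivAt_exp_smul_const (𝕂 := ℝ) x 0
  have hd2 : HasDerivAt (fun s : ℝ => exp (s • x)) y 0 := by
    have h := hasDerivAt_exp_smul_const (𝕂 := ℝ) y 0
    simp only [zero_smul, exp_zero, one_mul] at h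
    have hfe : (fun s : ℝ => exp (s • y)) = fun s : ℝ => exp (s • x) :=
      funext hsx
    rwa [hfe] at h
  have hyx : y = x := hd2.unique hd1
  rw [hx, hy] at hyx
  exact smul_right_injective A Complex.I_ne_zero hyx

/-- Bohnenblust–Karlin restated: if `#` is another involution on a C*-algebra
satisfying the C*-identity for the given norm, then the identity map is a
*-isomorphism from `(A, *)` to `(A, #)`, i.e. `a# = a*` for all `a`; in
particular every *-hermitian element is #-hermitian. -/
theorem stmt_13 {A : Type*} [NormedRing A] [StarRing A] [CStarRing A]
    [CompleteSpace A] [NormedAlgebra ℂ A] [StarModule ℂ A]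
    (f : A → A)
    (hf_add : ∀ x y, f (x + y) = f x + f y)
    (hf_smul : ∀ (c : ℂ) (x : A), f (c • x) = (starRingEnd ℂ c) • f x)
    (hf_mul : ∀ x y, f (x * y) = f y * f x)
    (hf_inv : ∀ x, f (f x) = x)
    (hf_cstar : ∀ a, ‖f a * a‖ = ‖a‖ ^ 2) :
    (∀ a : A, f a = star a) ∧ (∀ a : A, star a = a → f a = a) := by
  rcases subsingleton_or_nontrivial A with hs | hnt
  · exact ⟨fun a => Subsingleton.elim _ _, fun a _ => Subsingleton.elim _ _⟩
  have key : ∀ a : A, star a = a → f a = a := fun a ha =>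
    bk_selfadjoint f hf_add hf_smul hf_mul hf_inv hf_cstar a ha
  have main : ∀ a : A, f a = star a := by
    intro a
    set h : A := (2⁻¹ : ℂ) • (a + star a) with hh
    set z : A := a - h with hz
    have hconj : (star (2⁻¹ : ℂ)) = 2⁻¹ := by norm_num [Complex.star_def]
    have hh_sa : star h = h := by
      rw [hh, star_smul, star_add, star_star, hconj, add_comm]
    have hz_skew : star z = -z := by
      rw [hz, star_sub, hh_sa, hh]
      module
    set w : A := (-Complex.I) • z with hw
    have hw_sa : star w = w := by
      rw [hw, star_smul, Complex.star_def, map_neg, Complex.conj_I, neg_neg, hz_skew,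
        smul_neg, neg_smul]
    have hzw : z = Complex.I • w := by
      rw [hw, smul_smul, mul_neg, Complex.I_mul_I, neg_neg, one_smul]
    have hfh : f h = h := key h hh_sa
    have hfw : f w = w := key w hw_sa
    have hfz : f z = -z := by
      rw [hzw, hf_smul, hfw, Complex.conj_I, neg_smul]
    have hahz : a = h + z := by rw [hz]; abel
    have hfa : f a = h - z := by
      calc f a = f (h + z) := by rw [← hahz]
      _ = f h + f z := hf_add h z
      _ = h - z := by rw [hfh, hfz]; abel
    have hsa : star a = h - z := by
      rw [hahz, star_add, hh_sa, hz_skew]; abel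
    rw [hfa, hsa]
  exact ⟨main, fun a ha => by rw [main a, ha]⟩
end
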